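/- Define a coproduct Δ on the free vector space over planar binary rooted trees by: Δ(1) = 1⊗1, Δ(|) = 1⊗| + |⊗1, and Δ(t ∨ w) = Σ t₍₁₎ ⊗ (t₍₂₎ ∨ w) + Σ (t ∨ w₍₁₎) ⊗ w₍₂₎ − t ⊗ w. Then Δ is coassociative. -/

import Mathlib

open Classical

/-- Planar binary rooted trees. `leaf` is the unique tree `|` with one leaf. -/
inductive PBT : Type
  | leaf : PBT
  | node : PBT → PBT → PBT
  deriving DecidableEq

/-- Number of leaves of a planar binary rooted tree. -/
def leavesCount : PBT → ℕ
  | .leaf => 1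
  | .node l r => leavesCount l + leavesCount r

/-- Graft the tree `w` onto the leftmost (first) leaf of `t`. -/
def graft1 : PBT → PBT → PBT
  | .leaf, w => w
  | .node l r, w => .node (graft1 l w) r

/-- The product `t ⋋ w := w ∘₁ (t ∨ |)`. -/
def lprod (t w : PBT) : PBT := graft1 w (.node t .leaf)

/-- A tree is `⋋`-irreducible if it is not a product of two (nonempty) trees. -/
def Irr (t : PBT) : Prop := ¬ ∃ u w : PBT, t = lprod u w

/-- `∨` extended to trees-with-unit, the unit (`none`) acting as a unit. -/
def ovee : Option PBT → Option PBT → Option PBT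
  | none, b => b
  | a, none => a
  | some t, some w => some (PBT.node t w)

/-- The coproduct on trees (with values in the free module on pairs of
trees-with-unit): `Δ(t ∨ w) = Σ t₍₁₎ ⊗ (t₍₂₎ ∨ w) + Σ (t ∨ w₍₁₎) ⊗ w₍₂₎ − t ⊗ w`. -/
noncomputable def D0 : PBT → ((Option PBT × Option PBT) →₀ ℤ)
  | .leaf =>
      Finsupp.single (none, some PBT.leaf) 1 + Finsupp.single (some PBT.leaf, none) 1
  | .node t w =>
      ((D0 t).sum fun p a => a • Finsupp.single (p.1, ovee p.2 (some w)) 1) +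
      ((D0 w).sum fun p a => a • Finsupp.single (ovee (some t) p.1, p.2) 1) -
      Finsupp.single (some t, some w) 1

/-- The coproduct `Δ` on the vector space spanned by trees and the unit:
`Δ(1) = 1 ⊗ 1` and on trees it is given by `D0`. -/
noncomputable def D : Option PBT → ((Option PBT × Option PBT) →₀ ℤ)
  | none => Finsupp.single (none, none) 1
  | some t => D0 t

/-- `(Δ ⊗ id) ∘ Δ`, on basis elements. -/
noncomputable def DL (f : (Option PBT × Option PBT) →₀ ℤ) :
    (Option PBT × Option PBT × Option PBT) →₀ ℤ :=
  f.sum fun p a => a • ((D p.1).sum fun q b => b • Finsupp.single (q.1, q.2, p.2) 1)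

/-- `(id ⊗ Δ) ∘ Δ`, on basis elements. -/
noncomputable def DR (f : (Option PBT × Option PBT) →₀ ℤ) :
    (Option PBT × Option PBT × Option PBT) →₀ ℤ :=
  f.sum fun p a => a • ((D p.2).sum fun q b => b • Finsupp.single (p.1, q.1, q.2) 1)

section Coassoc

abbrev P2 := Option PBT × Option PBT
abbrev P3 := Option PBT × Option PBT × Option PBT
abbrev T2 := P2 →₀ ℤ
abbrev T3 := P3 →₀ ℤ

/-- Abbreviation for linear combination. -/
noncomputable def LC {α β : Type*} (s : α → (β →₀ ℤ)) : (α →₀ ℤ) →ₗ[ℤ] (β →₀ ℤ) :=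
  Finsupp.linearCombination ℤ s

@[simp] lemma LC_single {α β : Type*} (s : α → β →₀ ℤ) (a : α) (c : ℤ) :
    LC s (Finsupp.single a c) = c • s a :=
  Finsupp.linearCombination_single ..

lemma LC_apply {α β : Type*} (s : α → β →₀ ℤ) (f : α →₀ ℤ) :
    LC s f = f.sum fun p a => a • s p :=
  Finsupp.linearCombination_apply ..

lemma LC_LC {α β γ : Type*} (s : β → γ →₀ ℤ) (u : α → β →₀ ℤ) (f : α →₀ ℤ) :
    LC s (LC u f) = LC (fun p => LC s (u p)) f := by
  have : (LC s).comp (LC u) = LC (fun p => LC s (u p)) := by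
    apply Finsupp.lhom_ext
    intro a b
    simp [map_smul]
  exact congrFun (congrArg DFunLike.coe this) f

lemma LC_id {α β : Type*} (f : (α × β) →₀ ℤ) :
    LC (fun p : α × β => Finsupp.single (p.1, p.2) (1 : ℤ)) f = f := by
  have : LC (fun p : α × β => Finsupp.single (p.1, p.2) (1 : ℤ)) = LinearMap.id := by
    apply Finsupp.lhom_ext
    intro a b
    simp [Finsupp.smul_single]
  simp [this]

lemma LC_swap {α β γ : Type*} (h : α → β → γ →₀ ℤ) (G : α →₀ ℤ) (F : β →₀ ℤ) :
    LC (fun p => LC (fun q => h p q) F) G = LC (fun q => LC (fun p => h p q) G) F := by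
  simp only [LC_apply, Finsupp.smul_sum]
  rw [Finsupp.sum_comm]
  exact Finsupp.sum_congr fun q _ => Finsupp.sum_congr fun p _ => smul_comm _ _ _

lemma ovee_none_left (a : Option PBT) : ovee none a = a := by cases a <;> rfl
lemma ovee_none_right (a : Option PBT) : ovee a none = a := by cases a <;> rfl

noncomputable def RopL (a : Option PBT) : T2 →ₗ[ℤ] T2 :=
  LC fun p => Finsupp.single (p.1, ovee p.2 a) 1

noncomputable def LopL (a : Option PBT) : T2 →ₗ[ℤ] T2 :=
  LC fun p => Finsupp.single (ovee a p.1, p.2) 1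

noncomputable def M3op (a : Option PBT) : T3 →ₗ[ℤ] T3 :=
  LC fun p : P3 => Finsupp.single (p.1, p.2.1, ovee p.2.2 a) 1

noncomputable def M1op (a : Option PBT) : T3 →ₗ[ℤ] T3 :=
  LC fun p : P3 => Finsupp.single (ovee a p.1, p.2.1, p.2.2) 1

noncomputable def DLl : T2 →ₗ[ℤ] T3 :=
  LC fun p => LC (fun q => Finsupp.single (q.1, q.2, p.2) 1) (D p.1)

noncomputable def DRl : T2 →ₗ[ℤ] T3 :=
  LC fun p => LC (fun q => Finsupp.single (p.1, q.1, q.2) 1) (D p.2)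

lemma DL_eq (f : T2) : DL f = DLl f := by
  simp only [DL, DLl, LC_apply]

lemma DR_eq (f : T2) : DR f = DRl f := by
  simp only [DR, DRl, LC_apply]

lemma D_ovee (x y : Option PBT) :
    D (ovee x y) = RopL y (D x) + LopL x (D y) - Finsupp.single (x, y) 1 := by
  cases x with
  | none =>
    have hl : (fun p : P2 => Finsupp.single (ovee none p.1, p.2) (1:ℤ)) =
        (fun p : P2 => Finsupp.single (p.1, p.2) (1:ℤ)) :=
      funext fun p => by rw [ovee_none_left]
    cases y with
    | none =>
      simp only [ovee_none_left, D, RopL, LopL, LC_single, one_smul, ovee_none_right, hl, LC_id]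
      abel
    | some w =>
      simp only [ovee_none_left, D, RopL, LopL, LC_single, one_smul, hl, LC_id]
      abel
  | some t =>
    have hr : (fun p : P2 => Finsupp.single (p.1, ovee p.2 none) (1:ℤ)) =
        (fun p : P2 => Finsupp.single (p.1, p.2) (1:ℤ)) :=
      funext fun p => by rw [ovee_none_right]
    cases y with
    | none =>
      simp only [ovee_none_right, D, RopL, LopL, LC_single, one_smul, hr, LC_id]
      abel
    | some w =>
      show D0 (.node t w) = _
      rw [D0]
      simp only [RopL, LopL, LC_apply, D]

lemma DLl_single (x y : Option PBT) :
    DLl (Finsupp.single (x, y) 1) =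
      LC (fun q : P2 => Finsupp.single (q.1, q.2, y) 1) (D x) := by
  simp [DLl]

lemma DRl_single (x y : Option PBT) :
    DRl (Finsupp.single (x, y) 1) =
      LC (fun q : P2 => Finsupp.single (x, q.1, q.2) 1) (D y) := by
  simp [DRl]

lemma DLl_Rop (y : Option PBT) (f : T2) : DLl (RopL y f) = M3op y (DLl f) := by
  induction f using Finsupp.induction_linear with
  | zero => simp
  | add f g ihf ihg => simp only [map_add, ihf, ihg]
  | single a b =>
    simp only [RopL, DLl, M3op, LC_single, map_smul, LC_LC, one_smul]

lemma DRl_Lop (x : Option PBT) (g : T2) : DRl (LopL x g) = M1op x (DRl g) := by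
  induction g using Finsupp.induction_linear with
  | zero => simp
  | add f g ihf ihg => simp only [map_add, ihf, ihg]
  | single a b =>
    simp only [LopL, DRl, M1op, LC_single, map_smul, LC_LC, one_smul]

lemma DLl_Lop (x : Option PBT) (g : T2) :
    DLl (LopL x g) =
      LC (fun p : P2 => LC (fun q : P2 => Finsupp.single (q.1, ovee q.2 p.1, p.2) 1) (D x)) g +
      M1op x (DLl g) -
      LC (fun p : P2 => Finsupp.single (x, p.1, p.2) 1) g := by
  induction g using Finsupp.induction_linear with
  | zero => simp
  | add f g ihf ihg => simp only [map_add, ihf, ihg]; abel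
  | single a b =>
    simp only [LopL, DLl, M1op, LC_single, map_smul, LC_LC, one_smul, D_ovee,
      map_add, map_sub, RopL, smul_add, smul_sub]

lemma DRl_Rop (y : Option PBT) (f : T2) :
    DRl (RopL y f) =
      M3op y (DRl f) +
      LC (fun p : P2 => LC (fun q : P2 => Finsupp.single (p.1, ovee p.2 q.1, q.2) 1) (D y)) f -
      LC (fun p : P2 => Finsupp.single (p.1, p.2, y) 1) f := by
  induction f using Finsupp.induction_linear with
  | zero => simp
  | add f g ihf ihg => simp only [map_add, ihf, ihg]; abel
  | single a b =>
    simp only [RopL, DRl, M3op, LC_single, map_smul, LC_LC, one_smul, D_ovee,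
      map_add, map_sub, LopL, smul_add, smul_sub]

lemma coassoc0 : ∀ t : PBT, DLl (D0 t) = DRl (D0 t) := by
  intro t
  induction t with
  | leaf =>
    have h1 : D (none : Option PBT) =
        Finsupp.single ((none : Option PBT), (none : Option PBT)) 1 := rfl
    have h2 : D (some PBT.leaf) = D0 PBT.leaf := rfl
    rw [D0]
    simp only [map_add, DLl_single, DRl_single, h1, h2]
    rw [D0]
    simp only [map_add, LC_single, one_smul]
    abel
  | node t w iht ihw =>
    have key : D0 (.node t w) =
        RopL (some w) (D0 t) + LopL (some t) (D0 w) -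
          Finsupp.single (some t, some w) 1 := by
      have h := D_ovee (some t) (some w)
      simpa [ovee, D] using h
    have hF : D (some t) = D0 t := rfl
    have hG : D (some w) = D0 w := rfl
    rw [key, map_sub, map_add, map_sub, map_add,
      DLl_Rop, DLl_Lop, DLl_single, DRl_Rop, DRl_Lop, DRl_single,
      hF, hG, iht, ihw,
      LC_swap (fun p q : P2 => Finsupp.single (q.1, ovee q.2 p.1, p.2) (1:ℤ)) (D0 w) (D0 t)]
    abel

end Coassoc


/-- The coproduct `Δ` is coassociative. -/
theorem stmt14 (x : Option PBT) : DL (D x) = DR (D x) := by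
  rw [DL_eq, DR_eq]
  cases x with
  | none =>
    have h1 : D (none : Option PBT) =
        Finsupp.single ((none : Option PBT), (none : Option PBT)) 1 := rfl
    rw [h1, DLl_single, DRl_single, h1]
    simp
  | some t => exact coassoc0 t
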